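/- In type A_{n−1}, an affine permutation w is cyclically decreasing for a subset A ⊆ ℤ/nℤ with |A| < n if and only if w = s_{a_1}⋯s_{a_k} for a word a_1⋯a_k with distinct letters whose underlying set is A and in which, whenever i and i+1 both lie in A, the letter i+1 precedes i; the resulting w depends only on A and the correspondence A ↦ w is a bijection between proper subsets of ℤ/nℤ and cyclically decreasing affine permutations. -/

import Mathlib

/-- A word with distinct letters in `ℤ/nℤ` is *cyclically decreasing* if whenever `i` and
`i+1` both occur, the letter `i+1` precedes `i`. -/
def IsCycDecWord {n : ℕ} (l : List (ZMod n)) : Prop :=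
  l.Nodup ∧ ∀ i : ZMod n, i ∈ l → i + 1 ∈ l → l.idxOf (i + 1) < l.idxOf i

namespace Stmt13

variable {n : ℕ} [NeZero n]

/-! ### Basic facts about `ZMod n` for `n ≥ 3` -/

lemma one_ne_zero' (hn : 3 ≤ n) : (1 : ZMod n) ≠ 0 := by
  intro h
  have h2 := (ZMod.natCast_eq_zero_iff 1 n).mp (by exact_mod_cast h)
  have := Nat.le_of_dvd one_pos h2
  omega

lemma two_ne_zero' (hn : 3 ≤ n) : (2 : ZMod n) ≠ 0 := by
  intro h
  have h2 := (ZMod.natCast_eq_zero_iff 2 n).mp (by exact_mod_cast h)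
  have := Nat.le_of_dvd two_pos h2
  omega

lemma add_one_ne (hn : 3 ≤ n) (i : ZMod n) : i + 1 ≠ i := by
  intro h
  exact one_ne_zero' hn (by linear_combination h - i)

lemma add_two_ne (hn : 3 ≤ n) (i : ZMod n) : i + 2 ≠ i := by
  intro h
  exact two_ne_zero' hn (by linear_combination h - i)

/-! ### The integer model: generators as permutations of `ℤ` -/

/-- The action of the simple reflection `s_i` on `ℤ`. -/
def g (i : ZMod n) (x : ℤ) : ℤ :=
  if (x : ZMod n) = i then x + 1 else if (x : ZMod n) = i + 1 then x - 1 else x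

lemma g_eq_add (i : ZMod n) {x : ℤ} (h : (x : ZMod n) = i) : g i x = x + 1 := by
  simp [g, h]

lemma g_eq_sub (hn : 3 ≤ n) (i : ZMod n) {x : ℤ} (h : (x : ZMod n) = i + 1) :
    g i x = x - 1 := by
  rw [g, if_neg (by rw [h]; exact add_one_ne hn i), if_pos h]

lemma g_eq_self (i : ZMod n) {x : ℤ} (h1 : (x : ZMod n) ≠ i) (h2 : (x : ZMod n) ≠ i + 1) :
    g i x = x := by
  rw [g, if_neg h1, if_neg h2]

lemma cast_add_one (x : ℤ) : ((x + 1 : ℤ) : ZMod n) = (x : ZMod n) + 1 := by push_cast; ring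

lemma cast_sub_one (x : ℤ) : ((x - 1 : ℤ) : ZMod n) = (x : ZMod n) - 1 := by push_cast; ring

lemma g_invol (hn : 3 ≤ n) (i : ZMod n) : Function.Involutive (g i) := by
  intro x
  by_cases h1 : (x : ZMod n) = i
  · rw [g_eq_add i h1, g_eq_sub hn i (by rw [cast_add_one, h1])]; ring
  · by_cases h2 : (x : ZMod n) = i + 1
    · rw [g_eq_sub hn i h2,
        g_eq_add i (by rw [cast_sub_one, h2]; ring)]
      ring
    · rw [g_eq_self i h1 h2, g_eq_self i h1 h2]

/-- The simple reflections as permutations of `ℤ`. -/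
def sigma (hn : 3 ≤ n) (i : ZMod n) : Equiv.Perm ℤ := (g_invol hn i).toPerm

@[simp] lemma sigma_apply (hn : 3 ≤ n) (i : ZMod n) (x : ℤ) : sigma hn i x = g i x := rfl

lemma g_comm (hn : 3 ≤ n) {i j : ZMod n} (hij : i ≠ j) (h1 : j ≠ i + 1) (h2 : i ≠ j + 1)
    (x : ℤ) : g i (g j x) = g j (g i x) := by
  by_cases ha : (x : ZMod n) = j
  · rw [g_eq_add j ha,
      g_eq_self i (by rw [cast_add_one, ha]; exact fun h => h2 h.symm)
        (by rw [cast_add_one, ha]; intro h; exact hij (by linear_combination h.symm)),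
      g_eq_self i (ha ▸ fun h => hij h.symm) (by rw [ha]; exact fun h => h1 h),
      g_eq_add j ha]
  · by_cases hb : (x : ZMod n) = j + 1
    · rw [g_eq_sub hn j hb,
        g_eq_self i (by rw [cast_sub_one, hb]; simpa using fun h => hij h.symm)
          (by rw [cast_sub_one, hb]; intro h; exact h1 (by linear_combination h)),
        g_eq_self i (hb ▸ fun h => h2 h.symm) (by rw [hb]; intro h; exact hij (by linear_combination -h)),
        g_eq_sub hn j hb]
    · rw [g_eq_self j ha hb]
      by_cases hc : (x : ZMod n) = i
      · rw [g_eq_add i hc,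
          g_eq_self j (by rw [cast_add_one, hc]; exact fun h => h1 h.symm)
            (by rw [cast_add_one, hc]; intro h; exact hij (by linear_combination h))]
      · by_cases hd : (x : ZMod n) = i + 1
        · rw [g_eq_sub hn i hd,
            g_eq_self j (by rw [cast_sub_one, hd]; simpa using hij)
              (by rw [cast_sub_one, hd]; intro h; exact h2 (by linear_combination h))]
        · rw [g_eq_self i hc hd, g_eq_self j ha hb]

lemma g_braid (hn : 3 ≤ n) (i : ZMod n) (x : ℤ) :
    g i (g (i + 1) (g i (g (i + 1) (g i (g (i + 1) x))))) = x := by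
  have e1 : i + 1 ≠ i := add_one_ne hn i
  have f1 : i ≠ i + 1 := e1.symm
  have e2 : i + 1 + 1 ≠ i := by
    intro h; exact add_two_ne hn i (by linear_combination h)
  have f2 : i ≠ i + 1 + 1 := e2.symm
  have e3 : i + 1 + 1 ≠ i + 1 := add_one_ne hn (i + 1)
  have f3 : i + 1 ≠ i + 1 + 1 := e3.symm
  by_cases hi : (x : ZMod n) = i
  · have r3 : ((x + 1 : ℤ) : ZMod n) = i + 1 := by push_cast; rw [hi]
    have r4 : ((x + 1 + 1 : ℤ) : ZMod n) = i + 1 + 1 := by push_cast; rw [hi]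
    have r6 : ((x + 1 + 1 - 1 : ℤ) : ZMod n) = i + 1 := by push_cast; rw [hi]; ring
    have v1 : g (i+1) x = x := g_eq_self (i+1) (by rw [hi]; exact f1) (by rw [hi]; exact f2)
    have v2 : g i x = x + 1 := g_eq_add i hi
    have v3 : g (i+1) (x+1) = x + 1 + 1 := g_eq_add (i+1) r3
    have v4 : g i (x+1+1) = x + 1 + 1 := g_eq_self i (by rw [r4]; exact e2) (by rw [r4]; exact e3)
    have v5 : g (i+1) (x+1+1) = x + 1 + 1 - 1 := g_eq_sub hn (i+1) r4
    have v6 : g i (x+1+1-1) = x + 1 + 1 - 1 - 1 := g_eq_sub hn i r6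
    rw [v1, v2, v3, v4, v5, v6]; ring
  · by_cases hi1 : (x : ZMod n) = i + 1
    · have r2 : ((x + 1 : ℤ) : ZMod n) = i + 1 + 1 := by push_cast; rw [hi1]
      have r4 : ((x + 1 - 1 : ℤ) : ZMod n) = i + 1 := by push_cast; rw [hi1]; ring
      have r5 : ((x + 1 - 1 - 1 : ℤ) : ZMod n) = i := by push_cast; rw [hi1]; ring
      have v1 : g (i+1) x = x + 1 := g_eq_add (i+1) hi1
      have v2 : g i (x+1) = x + 1 := g_eq_self i (by rw [r2]; exact e2) (by rw [r2]; exact e3)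
      have v3 : g (i+1) (x+1) = x + 1 - 1 := g_eq_sub hn (i+1) r2
      have v4 : g i (x+1-1) = x + 1 - 1 - 1 := g_eq_sub hn i r4
      have v5 : g (i+1) (x+1-1-1) = x + 1 - 1 - 1 :=
        g_eq_self (i+1) (by rw [r5]; exact f1) (by rw [r5]; exact f2)
      have v6 : g i (x+1-1-1) = x + 1 - 1 - 1 + 1 := g_eq_add i r5
      rw [v1, v2, v3, v4, v5, v6]; ring
    · by_cases hi2 : (x : ZMod n) = i + 1 + 1
      · have r2 : ((x - 1 : ℤ) : ZMod n) = i + 1 := by push_cast; rw [hi2]; ring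
        have r3 : ((x - 1 - 1 : ℤ) : ZMod n) = i := by push_cast; rw [hi2]; ring
        have r5 : ((x - 1 - 1 + 1 : ℤ) : ZMod n) = i + 1 := by push_cast; rw [hi2]; ring
        have r6 : ((x - 1 - 1 + 1 + 1 : ℤ) : ZMod n) = i + 1 + 1 := by push_cast; rw [hi2]; ring
        have v1 : g (i+1) x = x - 1 := g_eq_sub hn (i+1) hi2
        have v2 : g i (x-1) = x - 1 - 1 := g_eq_sub hn i r2
        have v3 : g (i+1) (x-1-1) = x - 1 - 1 :=
          g_eq_self (i+1) (by rw [r3]; exact f1) (by rw [r3]; exact f2)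
        have v4 : g i (x-1-1) = x - 1 - 1 + 1 := g_eq_add i r3
        have v5 : g (i+1) (x-1-1+1) = x - 1 - 1 + 1 + 1 := g_eq_add (i+1) r5
        have v6 : g i (x-1-1+1+1) = x - 1 - 1 + 1 + 1 :=
          g_eq_self i (by rw [r6]; exact e2) (by rw [r6]; exact e3)
        rw [v1, v2, v3, v4, v5, v6]; ring
      · simp only [g_eq_self (i+1) hi1 hi2, g_eq_self i hi hi1]

lemma sigma_sq (hn : 3 ≤ n) (i : ZMod n) : sigma hn i * sigma hn i = 1 := by
  ext x
  simp only [Equiv.Perm.mul_apply, sigma_apply, Equiv.Perm.one_apply]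
  exact g_invol hn i x

lemma sigma_braid (hn : 3 ≤ n) (i : ZMod n) :
    (sigma hn i * sigma hn (i + 1)) ^ 3 = 1 := by
  ext x
  simp only [pow_succ, pow_zero, one_mul, Equiv.Perm.mul_apply, sigma_apply,
    Equiv.Perm.one_apply]
  exact g_braid hn i x

lemma sigma_comm_sq (hn : 3 ≤ n) {i j : ZMod n} (hij : i ≠ j) (h1 : j ≠ i + 1)
    (h2 : i ≠ j + 1) : (sigma hn i * sigma hn j) ^ 2 = 1 := by
  ext x
  simp only [pow_succ, pow_zero, one_mul, Equiv.Perm.mul_apply, sigma_apply,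
    Equiv.Perm.one_apply]
  rw [show g i (g j (g i (g j x))) = g i (g i (g j (g j x))) by
    rw [g_comm hn hij h1 h2 (g j x)], g_invol hn i, g_invol hn j]

lemma conj_cube {G : Type*} [Group G] (a b : G) : (a * b) ^ 3 = a * (b * a) ^ 3 * a⁻¹ := by
  simp [pow_succ, mul_assoc]

variable {M : CoxeterMatrix (ZMod n)}

lemma sigma_liftable (hn : 3 ≤ n)
    (hM : ∀ i j : ZMod n, M i j =
      if i = j then 1 else if i = j + 1 ∨ j = i + 1 then 3 else 2) :
    M.IsLiftable (sigma hn) := by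
  intro i j
  rw [hM i j]
  by_cases hij : i = j
  · subst hij
    simp [sigma_sq hn i]
  · rw [if_neg hij]
    by_cases hadj : i = j + 1 ∨ j = i + 1
    · rw [if_pos hadj]
      rcases hadj with h | h
      · subst h
        rw [conj_cube, sigma_braid hn j]
        group
      · subst h
        exact sigma_braid hn i
    · rw [if_neg hadj]
      push_neg at hadj
      exact sigma_comm_sq hn hij hadj.2 (hadj.1 ∘ Eq.symm ∘ Eq.symm)

lemma cast_add_n_sub_one (x : ℤ) : ((x + n - 1 : ℤ) : ZMod n) = (x : ZMod n) - 1 := by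
  push_cast
  simp [ZMod.natCast_self]

/-- The key invariant describing the action on `ℤ` of a cyclically decreasing element
with letter set `I`. -/
def Good (I : Finset (ZMod n)) (F : ℤ → ℤ) : Prop :=
  ∀ x : ℤ,
    (((x - 1 : ℤ) : ZMod n) ∈ I → F x = x - 1) ∧
    (((x - 1 : ℤ) : ZMod n) ∉ I → (x : ZMod n) ∈ I →
      x + 1 ≤ F x ∧ F x ≤ x + n - 1 ∧ ((F x : ℤ) : ZMod n) ∉ I ∧
        ((F x - 1 : ℤ) : ZMod n) ∈ I) ∧
    (((x - 1 : ℤ) : ZMod n) ∉ I → (x : ZMod n) ∉ I → F x = x)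

lemma good_id : Good (∅ : Finset (ZMod n)) (fun x => x) := by
  intro x
  refine ⟨fun h => absurd h (Finset.notMem_empty _), fun _ h => absurd h (Finset.notMem_empty _),
    fun _ _ => rfl⟩

lemma good_step (hn : 3 ≤ n) {I : Finset (ZMod n)} {i : ZMod n} (hiI : i ∈ I)
    (hi1 : i + 1 ∉ I) {F : ℤ → ℤ} (hF : Good (I.erase i) F) :
    Good I (fun x => g i (F x)) := by
  have hn' : (3 : ℤ) ≤ (n : ℤ) := by exact_mod_cast hn
  intro x
  obtain ⟨hF1, hF2, hF3⟩ := hF x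
  refine ⟨?_, ?_, ?_⟩
  · -- case (x-1) mod n ∈ I
    intro h
    by_cases hc : ((x - 1 : ℤ) : ZMod n) = i
    · have hx : (x : ZMod n) = i + 1 := by
        rw [cast_sub_one] at hc; linear_combination hc
      have hFx : F x = x := hF3 (by rw [hc]; exact Finset.notMem_erase i I)
        (by rw [hx]; intro hmem; exact hi1 (Finset.mem_of_mem_erase hmem))
      simp only [hFx]
      exact g_eq_sub hn i hx
    · have hFx : F x = x - 1 := hF1 (Finset.mem_erase.mpr ⟨hc, h⟩)
      simp only [hFx]
      exact g_eq_self i hc (by intro he; exact hi1 (he ▸ h))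
  · -- case (x-1) mod n ∉ I, x mod n ∈ I
    intro hm hr
    by_cases hc : (x : ZMod n) = i
    · have hFx : F x = x := hF3 (fun hmem => hm (Finset.mem_of_mem_erase hmem))
        (by rw [hc]; exact Finset.notMem_erase i I)
      simp only [hFx, g_eq_add i hc]
      refine ⟨le_refl _, by omega, ?_, ?_⟩
      · rw [cast_add_one, hc]; exact hi1
      · have : ((x + 1 - 1 : ℤ) : ZMod n) = i := by rw [show (x + 1 - 1 : ℤ) = x by ring, hc]
        rw [this]; exact hiI
    · have hb := hF2 (fun hmem => hm (Finset.mem_of_mem_erase hmem))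
        (Finset.mem_erase.mpr ⟨hc, hr⟩)
      obtain ⟨hb1, hb2, hb3, hb4⟩ := hb
      by_cases hd : ((F x : ℤ) : ZMod n) = i
      · have hne : F x ≠ x + n - 1 := by
          intro he
          have : ((F x : ℤ) : ZMod n) = (x : ZMod n) - 1 := by rw [he]; exact cast_add_n_sub_one x
          rw [hd] at this
          have : (x : ZMod n) = i + 1 := by linear_combination -this
          exact hi1 (this ▸ hr)
        simp only [g_eq_add i hd]
        refine ⟨by omega, by omega, ?_, ?_⟩
        · rw [cast_add_one, hd]; exact hi1
        · have : ((F x + 1 - 1 : ℤ) : ZMod n) = i := by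
            rw [show (F x + 1 - 1 : ℤ) = F x by ring, hd]
          rw [this]; exact hiI
      · have he : ((F x : ℤ) : ZMod n) ≠ i + 1 := by
          intro he
          have : ((F x - 1 : ℤ) : ZMod n) = i := by rw [cast_sub_one, he]; ring
          rw [this] at hb4
          exact (Finset.notMem_erase i I) hb4
        simp only [g_eq_self i hd he]
        refine ⟨hb1, hb2, ?_, Finset.mem_of_mem_erase hb4⟩
        intro hmem
        exact hb3 (Finset.mem_erase.mpr ⟨hd, hmem⟩)
  · -- case both ∉ I
    intro hm hr
    have hFx : F x = x := hF3 (fun hmem => hm (Finset.mem_of_mem_erase hmem))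
      (fun hmem => hr (Finset.mem_of_mem_erase hmem))
    simp only [hFx]
    exact g_eq_self i (fun he => hr (he ▸ hiI))
      (fun he => hm (by rw [cast_sub_one, he]; simpa using hiI))

/-! ### List-level machinery -/

/-- A sublist-based variant of `IsCycDecWord` that is stable under taking sublists. -/
def CDp (l : List (ZMod n)) : Prop := l.Nodup ∧ ∀ i : ZMod n, ¬ List.Sublist [i, i + 1] l

lemma cycdec_to_CDp {l : List (ZMod n)} (hl : IsCycDecWord l) : CDp l := by
  refine ⟨hl.1, fun i hsub => ?_⟩
  obtain ⟨r₁, r₂, rfl, hi, hsub2⟩ := List.cons_sublist_iff.mp hsub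
  have hi1 : i + 1 ∈ r₂ := List.singleton_sublist.mp hsub2
  have hkey := hl.2 i (List.mem_append.mpr (Or.inl hi)) (List.mem_append.mpr (Or.inr hi1))
  have hdisj : i + 1 ∉ r₁ := by
    intro hmem
    exact (List.nodup_append'.mp hl.1).2.2 hmem hi1
  have h1 : (r₁ ++ r₂).idxOf i < r₁.length := by
    rw [List.idxOf_append_of_mem hi]
    exact (List.idxOf_lt_length_iff.mpr hi).trans_le (le_refl _) |>.trans_le
      (le_of_eq rfl) |>.trans_le (le_refl _) |>.trans_le (le_refl _) |>.trans_le (le_refl _)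
  have h2 : r₁.length ≤ (r₁ ++ r₂).idxOf (i + 1) := by
    rw [List.idxOf_append_of_notMem hdisj]
    omega
  omega

lemma CDp.sublist {l l' : List (ZMod n)} (h : CDp l) (hs : List.Sublist l' l) : CDp l' :=
  ⟨h.1.sublist hs, fun i hsub => h.2 i (hsub.trans hs)⟩

lemma exists_runtop (hn : 3 ≤ n) {I : Finset (ZMod n)} (hne : I.Nonempty)
    (hproper : I ≠ Finset.univ) : ∃ i ∈ I, i + 1 ∉ I := by
  by_contra h
  push_neg at h
  obtain ⟨a, ha⟩ := hne
  have key : ∀ k : ℕ, a + (k : ZMod n) ∈ I := by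
    intro k
    induction k with
    | zero => simpa using ha
    | succ m ih =>
        rw [show ((m + 1 : ℕ) : ZMod n) = (m : ZMod n) + 1 by push_cast; ring, ← add_assoc]
        exact h _ ih
  apply hproper
  ext b
  simp only [Finset.mem_univ, iff_true]
  have hb := key ((b - a).val)
  rwa [ZMod.natCast_rightInverse (b - a), show a + (b - a) = b by ring] at hb

lemma exists_word (hn : 3 ≤ n) (I : Finset (ZMod n)) :
    I ≠ Finset.univ → ∃ l : List (ZMod n), IsCycDecWord l ∧ l.toFinset = I := by
  induction I using Finset.strongInduction with
  | _ I IH =>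
    intro hproper
    rcases I.eq_empty_or_nonempty with rfl | hne
    · exact ⟨[], ⟨List.nodup_nil, fun i hi _ => absurd hi List.not_mem_nil⟩, by simp⟩
    · obtain ⟨i, hiI, hi1⟩ := exists_runtop hn hne hproper
      have hss : I.erase i ⊂ I := Finset.erase_ssubset hiI
      have hproper' : I.erase i ≠ Finset.univ := by
        intro h
        exact (Finset.notMem_erase i I) (h ▸ Finset.mem_univ i)
      obtain ⟨l', hl', hfin'⟩ := IH _ hss hproper'
      have hinotmem : i ∉ l' := by
        intro h
        exact (Finset.notMem_erase i I) (hfin' ▸ List.mem_toFinset.mpr h)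
      refine ⟨i :: l', ⟨List.nodup_cons.mpr ⟨hinotmem, hl'.1⟩, ?_⟩, ?_⟩
      · intro j hj hj1
        by_cases hji : j = i
        · subst hji
          rcases List.mem_cons.mp hj1 with h | h
          · exact absurd h (add_one_ne hn j)
          · exact absurd (hfin' ▸ List.mem_toFinset.mpr h) fun hm =>
              hi1 (Finset.mem_of_mem_erase hm)
        · by_cases hj1i : j + 1 = i
          · rw [hj1i, List.idxOf_cons_self,
              List.idxOf_cons_ne _ (fun h => hji h.symm)]
            exact Nat.succ_pos _
          · have hjl : j ∈ l' := (List.mem_cons.mp hj).resolve_left hji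
            have hj1l : j + 1 ∈ l' := (List.mem_cons.mp hj1).resolve_left hj1i
            rw [List.idxOf_cons_ne _ (fun h => hji h.symm),
              List.idxOf_cons_ne _ (fun h => hj1i h.symm)]
            exact Nat.succ_lt_succ (hl'.2 j hjl hj1l)
      · rw [List.toFinset_cons, hfin', Finset.insert_erase hiI]

/-! ### Coxeter-dependent part -/

variable {W : Type*} [Group W]

lemma simple_comm (hM : ∀ i j : ZMod n, M i j =
      if i = j then 1 else if i = j + 1 ∨ j = i + 1 then 3 else 2)
    (cs : CoxeterSystem M W) {i j : ZMod n} (hij : i ≠ j) (h1 : j ≠ i + 1) (h2 : i ≠ j + 1) :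
    Commute (cs.simple i) (cs.simple j) := by
  have h := cs.simple_mul_simple_pow i j
  rw [hM i j, if_neg hij, if_neg (by tauto)] at h
  have h' : (cs.simple i * cs.simple j) * (cs.simple i * cs.simple j) = 1 := by
    rw [← pow_two]; exact h
  have heq : cs.simple i * cs.simple j = (cs.simple i * cs.simple j)⁻¹ :=
    eq_inv_of_mul_eq_one_right h'
  unfold Commute SemiconjBy
  rw [heq, mul_inv_rev, cs.inv_simple, cs.inv_simple]

lemma pull_out (hM : ∀ i j : ZMod n, M i j =
      if i = j then 1 else if i = j + 1 ∨ j = i + 1 then 3 else 2)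
    (cs : CoxeterSystem M W) {l : List (ZMod n)} (hl : CDp l) {i : ZMod n} (hi : i ∈ l)
    (hi1 : i + 1 ∉ l) :
    ∃ l' : List (ZMod n), CDp l' ∧ l'.toFinset = l.toFinset.erase i ∧
      l'.length + 1 = l.length ∧ cs.wordProd l = cs.simple i * cs.wordProd l' := by
  obtain ⟨l₁, l₂, rfl⟩ := List.append_of_mem hi
  have hnd := hl.1
  have hdisj := (List.nodup_append'.mp hnd).2.2
  have hnotmem₁ : i ∉ l₁ := fun h => hdisj h (List.mem_cons_self (a := i) (l := l₂))
  have hnotmem₂ : i ∉ l₂ := by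
    have := (List.nodup_append'.mp hnd).2.1
    exact fun h => (List.nodup_cons.mp this).1 h
  have hcomm : ∀ j ∈ l₁, Commute (cs.simple i) (cs.simple j) := by
    intro j hj
    refine simple_comm hM cs (fun h => hnotmem₁ (h ▸ hj)) ?_ ?_
    · intro h
      exact hi1 (h ▸ (List.mem_append.mpr (Or.inl hj)))
    · intro h
      apply hl.2 j
      rw [← h]
      exact List.cons_sublist_iff.mpr ⟨l₁, i :: l₂, rfl, hj,
        List.singleton_sublist.mpr (List.mem_cons_self (a := i) (l := l₂))⟩
  refine ⟨l₁ ++ l₂, hl.sublist ((List.sublist_cons_self i l₂).append_left l₁), ?_, ?_, ?_⟩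
  · ext a
    simp only [List.mem_toFinset, List.mem_append, Finset.mem_erase, List.mem_cons]
    constructor
    · rintro (h | h)
      · exact ⟨fun he => hnotmem₁ (he ▸ h), Or.inl h⟩
      · exact ⟨fun he => hnotmem₂ (he ▸ h), Or.inr (Or.inr h)⟩
    · rintro ⟨hne, (h | h | h)⟩
      · exact Or.inl h
      · exact absurd h hne
      · exact Or.inr h
  · simp; omega
  · rw [cs.wordProd_append, cs.wordProd_append, cs.wordProd_cons]
    have hc : Commute (cs.simple i) (cs.wordProd l₁) := by
      have hw : cs.wordProd l₁ = (l₁.map cs.simple).prod := rfl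
      rw [hw]
      refine Commute.list_prod_right _ _ (fun y hy => ?_)
      obtain ⟨j, hj, rfl⟩ := List.mem_map.mp hy
      exact hcomm j hj
    rw [← mul_assoc, ← hc.eq, mul_assoc]

lemma good_of_CDp (hn : 3 ≤ n)
    (hM : ∀ i j : ZMod n, M i j =
      if i = j then 1 else if i = j + 1 ∨ j = i + 1 then 3 else 2)
    (cs : CoxeterSystem M W) :
    ∀ N : ℕ, ∀ l : List (ZMod n), l.length ≤ N → CDp l → l.toFinset ≠ Finset.univ →
      Good l.toFinset
        (fun x => cs.lift ⟨sigma hn, sigma_liftable hn hM⟩ (cs.wordProd l) x) := by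
  intro N
  induction N with
  | zero =>
    intro l hlen hl hproper
    have hnil : l = [] := List.length_eq_zero_iff.mp (Nat.le_zero.mp hlen)
    subst hnil
    simpa [CoxeterSystem.wordProd_nil] using (good_id (n := n))
  | succ N IH =>
    intro l hlen hl hproper
    rcases eq_or_ne l [] with rfl | hne
    · simpa [CoxeterSystem.wordProd_nil] using (good_id (n := n))
    · have hne' : l.toFinset.Nonempty := by
        obtain ⟨a, ha⟩ := List.exists_mem_of_ne_nil l hne
        exact ⟨a, List.mem_toFinset.mpr ha⟩
      obtain ⟨i, hiI, hi1⟩ := exists_runtop hn hne' hproper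
      obtain ⟨l', hl', hfin', hlen', hprod⟩ := pull_out hM cs hl (List.mem_toFinset.mp hiI)
        (fun h => hi1 (List.mem_toFinset.mpr h))
      have hproper' : l'.toFinset ≠ Finset.univ := by
        intro h
        rw [hfin'] at h
        exact (Finset.notMem_erase i l.toFinset) (h ▸ Finset.mem_univ i)
      have hGood := IH l' (by omega) hl' hproper'
      rw [hfin'] at hGood
      have := good_step hn hiI hi1 hGood
      convert this using 2 with x
      rw [hprod, map_mul, CoxeterSystem.lift_apply_simple]
      rfl

lemma mem_iff_fix (hn : 3 ≤ n)
    (hM : ∀ i j : ZMod n, M i j =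
      if i = j then 1 else if i = j + 1 ∨ j = i + 1 then 3 else 2)
    (cs : CoxeterSystem M W) {l : List (ZMod n)} (hl : CDp l)
    (hproper : l.toFinset ≠ Finset.univ) (i : ZMod n) :
    i ∈ l.toFinset ↔
      cs.lift ⟨sigma hn, sigma_liftable hn hM⟩ (cs.wordProd l) (((i + 1).val : ℤ)) =
        ((i + 1).val : ℤ) - 1 := by
  have hG := good_of_CDp hn hM cs l.length l le_rfl hl hproper
  set x : ℤ := ((i + 1).val : ℤ) with hxdef
  have hx : (x : ZMod n) = i + 1 := by
    rw [hxdef]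
    push_cast
    exact ZMod.natCast_rightInverse (i + 1)
  have hx1 : ((x - 1 : ℤ) : ZMod n) = i := by rw [cast_sub_one, hx]; ring
  obtain ⟨h1, h2, h3⟩ := hG x
  constructor
  · intro hi
    exact h1 (by rw [hx1]; exact hi)
  · intro hfix
    by_contra hi
    by_cases hmem : (x : ZMod n) ∈ l.toFinset
    · have hb := h2 (by rw [hx1]; exact hi) hmem
      have := hb.1
      simp only [hfix] at this
      omega
    · have hb := h3 (by rw [hx1]; exact hi) hmem
      simp only [hfix] at hb
      omega

lemma prod_unique (hn : 3 ≤ n)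
    (hM : ∀ i j : ZMod n, M i j =
      if i = j then 1 else if i = j + 1 ∨ j = i + 1 then 3 else 2)
    (cs : CoxeterSystem M W) :
    ∀ N : ℕ, ∀ l₁ l₂ : List (ZMod n), l₁.length ≤ N → CDp l₁ → CDp l₂ →
      l₁.toFinset = l₂.toFinset → l₁.toFinset ≠ Finset.univ →
      cs.wordProd l₁ = cs.wordProd l₂ := by
  intro N
  induction N with
  | zero =>
    intro l₁ l₂ hlen h₁ h₂ hfin hproper
    have hnil : l₁ = [] := List.length_eq_zero_iff.mp (Nat.le_zero.mp hlen)
    subst hnil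
    have : l₂.toFinset = ∅ := by simpa using hfin.symm
    rw [List.toFinset_eq_empty_iff] at this
    rw [this]
  | succ N IH =>
    intro l₁ l₂ hlen h₁ h₂ hfin hproper
    rcases eq_or_ne l₁ [] with rfl | hne
    · have : l₂.toFinset = ∅ := by simpa using hfin.symm
      rw [List.toFinset_eq_empty_iff] at this
      rw [this]
    · have hne' : l₁.toFinset.Nonempty := by
        obtain ⟨a, ha⟩ := List.exists_mem_of_ne_nil l₁ hne
        exact ⟨a, List.mem_toFinset.mpr ha⟩
      obtain ⟨i, hiI, hi1⟩ := exists_runtop hn hne' hproper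
      obtain ⟨l₁', hl₁', hfin₁', hlen₁', hprod₁⟩ := pull_out hM cs h₁
        (List.mem_toFinset.mp hiI) (fun h => hi1 (List.mem_toFinset.mpr h))
      obtain ⟨l₂', hl₂', hfin₂', hlen₂', hprod₂⟩ := pull_out hM cs h₂
        (List.mem_toFinset.mp (hfin ▸ hiI)) (fun h => hi1 (hfin ▸ List.mem_toFinset.mpr h))
      rw [hprod₁, hprod₂]
      congr 1
      have hproper' : l₁'.toFinset ≠ Finset.univ := by
        intro h
        rw [hfin₁'] at h
        exact (Finset.notMem_erase i l₁.toFinset) (h ▸ Finset.mem_univ i)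
      exact IH l₁' l₂' (by omega) hl₁' hl₂'
        (by rw [hfin₁', hfin₂', hfin]) hproper'

end Stmt13

/-- In type `A_{n−1}`: for each proper subset `A ⊆ ℤ/nℤ` there is a
unique affine permutation which is the product `s_{a_1} ⋯ s_{a_k}` along a cyclically
decreasing word with letter set `A` (so the cyclically decreasing element depends only on
`A`), and the correspondence `A ↦ w` is injective; hence it is a bijection between proper
subsets of `ℤ/nℤ` and cyclically decreasing affine permutations. -/
theorem stmt_13
    (n : ℕ) [NeZero n] (hn : 3 ≤ n)
    -- the affine symmetric group, as the Coxeter group on generators s_i, i ∈ ℤ/nℤ,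
    -- with the affine type A Coxeter matrix
    (M : CoxeterMatrix (ZMod n))
    (hM : ∀ i j : ZMod n, M i j =
      if i = j then 1 else if i = j + 1 ∨ j = i + 1 then 3 else 2)
    (Waff : Type*) [Group Waff]
    (cs : CoxeterSystem M Waff) :
    -- well-definedness: A determines w
    (∀ I : Finset (ZMod n), I ≠ Finset.univ →
      ∃! w : Waff, ∃ l : List (ZMod n),
        IsCycDecWord l ∧ l.toFinset = I ∧ w = cs.wordProd l) ∧
    -- injectivity: distinct proper subsets give distinct cyclically decreasing elements
    (∀ l₁ l₂ : List (ZMod n),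
      IsCycDecWord l₁ → l₁.toFinset ≠ Finset.univ →
      IsCycDecWord l₂ → l₂.toFinset ≠ Finset.univ →
      cs.wordProd l₁ = cs.wordProd l₂ → l₁.toFinset = l₂.toFinset) := by
  constructor
  · intro I hI
    obtain ⟨l₀, hcd₀, hfin₀⟩ := Stmt13.exists_word hn I hI
    refine ⟨cs.wordProd l₀, ⟨l₀, hcd₀, hfin₀, rfl⟩, ?_⟩
    rintro w ⟨l, hcd, hfin, rfl⟩
    exact Stmt13.prod_unique hn hM cs l.length l l₀ le_rfl (Stmt13.cycdec_to_CDp hcd)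
      (Stmt13.cycdec_to_CDp hcd₀) (hfin.trans hfin₀.symm) (by rw [hfin]; exact hI)
  · intro l₁ l₂ h₁ hp₁ h₂ hp₂ heq
    ext i
    rw [Stmt13.mem_iff_fix hn hM cs (Stmt13.cycdec_to_CDp h₁) hp₁ i,
      Stmt13.mem_iff_fix hn hM cs (Stmt13.cycdec_to_CDp h₂) hp₂ i, heq]
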